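/- Let g be a metric on an open set U ⊆ ℝⁿ with Levi-Civita connection Λ, and let F_{αμν} : U → ℝ be smooth and completely antisymmetric in all three indices. Define the connection Γ^α_{μν} = Λ^α_{μν} + (1/2) g^{ακ} F_{κμν}. Then the Ricci scalar of Γ, namely F = g^{ji} F^a{}_{jai} where F^a{}_{jki} is the Riemann tensor of Γ, satisfies F = R − (1/4) F_{abc} F^{abc}, where R is the scalar curvature of g and the indices of F are raised with g^{··}. -/

import Mathlib

open Matrix

/-- The partial derivative of `f : ℝⁿ → ℝ` in the `μ`-th coordinate direction. -/
noncomputable def pd {n : ℕ} (μ : Fin n) (f : (Fin n → ℝ) → ℝ) (x : Fin n → ℝ) : ℝ :=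
  fderiv ℝ f x (Pi.single μ 1)

/-- The Levi-Civita connection `Λ^η_{αβ}` of a metric `g`. -/
noncomputable def levi {n : ℕ} (g : (Fin n → ℝ) → Matrix (Fin n) (Fin n) ℝ)
    (x : Fin n → ℝ) (η α β : Fin n) : ℝ :=
  (1 / 2) * ∑ μ, (g x)⁻¹ η μ *
    (pd β (fun y => g y α μ) x + pd α (fun y => g y μ β) x - pd μ (fun y => g y α β) x)

/-- The Riemann tensor `F^a{}_{jki}` of a connection `Γ`. -/
noncomputable def riem {n : ℕ} (Γ : (Fin n → ℝ) → Fin n → Fin n → Fin n → ℝ)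
    (x : Fin n → ℝ) (a j k i : Fin n) : ℝ :=
  pd k (fun y => Γ y a j i) x - pd i (fun y => Γ y a j k) x
    + ∑ r, (Γ x a r k * Γ x r j i - Γ x a r i * Γ x r j k)

/-- The Ricci scalar of a connection `Γ` with respect to the metric `g`:
`g^{ji} F^a{}_{jai}`. -/
noncomputable def ricciScalar {n : ℕ} (g : (Fin n → ℝ) → Matrix (Fin n) (Fin n) ℝ)
    (Γ : (Fin n → ℝ) → Fin n → Fin n → Fin n → ℝ) (x : Fin n → ℝ) : ℝ :=
  ∑ j, ∑ i, (g x)⁻¹ j i * ∑ a, riem Γ x a j a i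

/-! ### Auxiliary material -/

/-- The contorsion-type tensor `K^a_{μν} = (1/2) g^{aκ} F_{κμν}`. -/
noncomputable def Kt {n : ℕ} (g : (Fin n → ℝ) → Matrix (Fin n) (Fin n) ℝ)
    (F : (Fin n → ℝ) → Fin n → Fin n → Fin n → ℝ) (y : Fin n → ℝ) (a μ ν : Fin n) : ℝ :=
  (1 / 2) * ∑ κ, (g y)⁻¹ a κ * F y κ μ ν

section Aux
variable {n : ℕ} {x : Fin n → ℝ}

lemma contDiffAt_det' {M : (Fin n → ℝ) → Matrix (Fin n) (Fin n) ℝ}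
    (h : ∀ i j, ContDiffAt ℝ (⊤ : ℕ∞) (fun y => M y i j) x) :
    ContDiffAt ℝ (⊤ : ℕ∞) (fun y => (M y).det) x := by
  simp_rw [Matrix.det_apply']
  exact ContDiffAt.sum fun σ _ => contDiffAt_const.mul (contDiffAt_prod fun i _ => h _ _)

lemma contDiffAt_inv_entry {g : (Fin n → ℝ) → Matrix (Fin n) (Fin n) ℝ}
    (h : ∀ i j, ContDiffAt ℝ (⊤ : ℕ∞) (fun y => g y i j) x)
    (hdet : (g x).det ≠ 0) (a b : Fin n) :
    ContDiffAt ℝ (⊤ : ℕ∞) (fun y => (g y)⁻¹ a b) x := by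
  have e : (fun y => (g y)⁻¹ a b)
      = fun y => ((g y).det)⁻¹ * ((g y).updateRow b (Pi.single a 1)).det := by
    funext y
    rw [Matrix.inv_def, Matrix.smul_apply, Ring.inverse_eq_inv', Matrix.adjugate_apply]
    rfl
  rw [e]
  refine ((contDiffAt_det' h).inv hdet).mul (contDiffAt_det' fun i j => ?_)
  by_cases hib : i = b
  · simp only [hib, Matrix.updateRow_self]
    exact contDiffAt_const
  · simp only [Matrix.updateRow_ne hib]
    exact h i j

lemma pd_congr_nhds {μ : Fin n} {f h : (Fin n → ℝ) → ℝ} (hfh : f =ᶠ[nhds x] h) :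
    pd μ f x = pd μ h x := by
  unfold pd; rw [hfh.fderiv_eq]

lemma pd_add {μ : Fin n} {f h : (Fin n → ℝ) → ℝ} (hf : DifferentiableAt ℝ f x)
    (hh : DifferentiableAt ℝ h x) :
    pd μ (fun y => f y + h y) x = pd μ f x + pd μ h x := by
  unfold pd; rw [fderiv_fun_add hf hh]; rfl

lemma pd_neg {μ : Fin n} {f : (Fin n → ℝ) → ℝ} :
    pd μ (fun y => -f y) x = -pd μ f x := by
  unfold pd; rw [fderiv_fun_neg]; rfl

lemma pd_sum {μ : Fin n} {ι : Type*} {s : Finset ι} {f : ι → (Fin n → ℝ) → ℝ}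
    (h : ∀ a ∈ s, DifferentiableAt ℝ (f a) x) :
    pd μ (fun y => ∑ a ∈ s, f a y) x = ∑ a ∈ s, pd μ (f a) x := by
  unfold pd; rw [fderiv_fun_sum h]; simp

lemma pd_eventually_zero {μ : Fin n} {f : (Fin n → ℝ) → ℝ}
    (h : f =ᶠ[nhds x] fun _ => (0 : ℝ)) : pd μ f x = 0 := by
  unfold pd; rw [h.fderiv_eq]; simp

lemma contract_antisym (A B : Fin n → Fin n → ℝ)
    (hA : ∀ i j, A i j = A j i) (hB : ∀ i j, B i j = -B j i) :
    ∑ j, ∑ i, A j i * B j i = 0 := by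
  have h : (∑ j, ∑ i, A j i * B j i) = -(∑ j, ∑ i, A j i * B j i) := by
    calc ∑ j, ∑ i, A j i * B j i = ∑ i, ∑ j, A j i * B j i := Finset.sum_comm
    _ = ∑ j, ∑ i, A j i * -(B j i) := by
        refine Finset.sum_congr rfl fun j _ => Finset.sum_congr rfl fun i _ => ?_
        rw [hA i j, hB i j]
    _ = -(∑ j, ∑ i, A j i * B j i) := by
        simp [mul_neg, ← Finset.sum_neg_distrib]
  linarith

lemma sum4_reindex (f : Fin n → Fin n → Fin n → Fin n → ℝ) :
    (∑ j, ∑ i, ∑ a, ∑ r, f j i a r) = ∑ j, ∑ i, ∑ a, ∑ r, f i j r a := by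
  rw [Finset.sum_comm]
  exact Finset.sum_congr rfl fun i _ => Finset.sum_congr rfl fun j _ => Finset.sum_comm

lemma sum6_perm {M : Type*} [AddCommMonoid M]
    (f : Fin n → Fin n → Fin n → Fin n → Fin n → Fin n → M) :
    (∑ x1, ∑ x2, ∑ x3, ∑ x4, ∑ x5, ∑ x6, f x1 x2 x3 x4 x5 x6)
      = ∑ y1, ∑ y2, ∑ y3, ∑ y4, ∑ y5, ∑ y6, f y5 y4 y2 y3 y6 y1 := by
  classical
  calc (∑ x1, ∑ x2, ∑ x3, ∑ x4, ∑ x5, ∑ x6, f x1 x2 x3 x4 x5 x6)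
      = ∑ p : Fin n × Fin n × Fin n × Fin n × Fin n × Fin n,
          f p.1 p.2.1 p.2.2.1 p.2.2.2.1 p.2.2.2.2.1 p.2.2.2.2.2 := by
        simp only [Fintype.sum_prod_type]
    _ = ∑ q : Fin n × Fin n × Fin n × Fin n × Fin n × Fin n,
          f q.2.2.2.2.1 q.2.2.2.1 q.2.1 q.2.2.1 q.2.2.2.2.2 q.1 := by
        exact Fintype.sum_equiv
          ⟨fun p => (p.2.2.2.2.2, p.2.2.1, p.2.2.2.1, p.2.1, p.1, p.2.2.2.2.1),
           fun q => (q.2.2.2.2.1, q.2.2.2.1, q.2.1, q.2.2.1, q.2.2.2.2.2, q.1),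
           fun ⟨a, b, c, d, e, k⟩ => rfl, fun ⟨a, b, c, d, e, k⟩ => rfl⟩
          _ _ fun p => rfl
    _ = ∑ y1, ∑ y2, ∑ y3, ∑ y4, ∑ y5, ∑ y6, f y5 y4 y2 y3 y6 y1 := by
        simp only [Fintype.sum_prod_type]

end Aux

/-- for the connection `Γ^α_{μν} = Λ^α_{μν} + (1/2) g^{ακ} F_{κμν}` built
from a completely antisymmetric Cartan tensor `F`, the Ricci scalar satisfies
`F = R − (1/4) F_{abc} F^{abc}`. -/
theorem ricci_scalar_decomposition_with_cartan
    (n : ℕ) (U : Set (Fin n → ℝ)) (hU : IsOpen U)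
    (g : (Fin n → ℝ) → Matrix (Fin n) (Fin n) ℝ)
    (hg : ∀ μ ν : Fin n, ContDiffOn ℝ (⊤ : ℕ∞) (fun x => g x μ ν) U)
    (hgsym : ∀ x ∈ U, (g x)ᵀ = g x)
    (hginv : ∀ x ∈ U, IsUnit (g x).det)
    (F : (Fin n → ℝ) → Fin n → Fin n → Fin n → ℝ)
    (hF : ∀ α μ ν : Fin n, ContDiffOn ℝ (⊤ : ℕ∞) (fun x => F x α μ ν) U)
    (hanti1 : ∀ x ∈ U, ∀ α μ ν : Fin n, F x α μ ν = -F x μ α ν)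
    (hanti2 : ∀ x ∈ U, ∀ α μ ν : Fin n, F x α μ ν = -F x α ν μ) :
    ∀ x ∈ U,
      ricciScalar g
        (fun y α μ ν => levi g y α μ ν + (1 / 2) * ∑ κ, (g y)⁻¹ α κ * F y κ μ ν) x
      = ricciScalar g (levi g) x
        - (1 / 4) * ∑ a, ∑ b, ∑ c, ∑ a', ∑ b', ∑ c',
            (g x)⁻¹ a a' * (g x)⁻¹ b b' * (g x)⁻¹ c c' * F x a b c * F x a' b' c' := by
  intro x hx
  have N : U ∈ nhds x := hU.mem_nhds hx
  -- Smoothness facts at `x`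
  have hgAt : ∀ μ ν, ContDiffAt ℝ (⊤ : ℕ∞) (fun y => g y μ ν) x :=
    fun μ ν => (hg μ ν).contDiffAt N
  have hFAt : ∀ a b c, ContDiffAt ℝ (⊤ : ℕ∞) (fun y => F y a b c) x :=
    fun a b c => (hF a b c).contDiffAt N
  have hdet : (g x).det ≠ 0 := (isUnit_iff_ne_zero.mp (hginv x hx))
  have hInv : ∀ a b, ContDiffAt ℝ (⊤ : ℕ∞) (fun y => (g y)⁻¹ a b) x :=
    fun a b => contDiffAt_inv_entry hgAt hdet a b
  have hpdAt : ∀ μ α β, ContDiffAt ℝ (⊤ : ℕ∞) (fun y => pd μ (fun z => g z α β) y) x := by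
    intro μ α β
    have h1 : ContDiffAt ℝ (⊤ : ℕ∞) (fderiv ℝ (fun z => g z α β)) x :=
      (hgAt α β).fderiv_right (by exact_mod_cast le_top)
    exact h1.clm_apply contDiffAt_const
  have hLeviAt : ∀ η α β, ContDiffAt ℝ (⊤ : ℕ∞) (fun y => levi g y η α β) x := by
    intro η α β
    unfold levi
    exact contDiffAt_const.mul (ContDiffAt.sum fun μ _ =>
      (hInv η μ).mul (((hpdAt β α μ).add (hpdAt α μ β)).sub (hpdAt μ α β)))
  have hKAt : ∀ a μ ν, ContDiffAt ℝ (⊤ : ℕ∞) (fun y => Kt g F y a μ ν) x := by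
    intro a μ ν
    unfold Kt
    exact contDiffAt_const.mul (ContDiffAt.sum fun κ _ => (hInv a κ).mul (hFAt κ μ ν))
  have dLevi : ∀ η α β, DifferentiableAt ℝ (fun y => levi g y η α β) x :=
    fun η α β => (hLeviAt η α β).differentiableAt (by simp)
  have dK : ∀ a μ ν, DifferentiableAt ℝ (fun y => Kt g F y a μ ν) x :=
    fun a μ ν => (hKAt a μ ν).differentiableAt (by simp)
  -- Pointwise symmetry facts
  have hGsymU : ∀ y ∈ U, ∀ a b, (g y)⁻¹ a b = (g y)⁻¹ b a := by
    intro y hy a b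
    have h1 : ((g y)⁻¹)ᵀ = (g y)⁻¹ := by
      rw [Matrix.transpose_nonsing_inv, hgsym y hy]
    calc (g y)⁻¹ a b = ((g y)⁻¹)ᵀ b a := rfl
    _ = (g y)⁻¹ b a := by rw [h1]
  have hGsym : ∀ a b, (g x)⁻¹ a b = (g x)⁻¹ b a := hGsymU x hx
  have hFcyc : ∀ y ∈ U, ∀ a b c, F y a b c = F y b c a := by
    intro y hy a b c
    rw [hanti1 y hy a b c, hanti2 y hy b a c]
    ring
  have hF13 : ∀ y ∈ U, ∀ a b c, F y a b c = -F y c b a := by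
    intro y hy a b c
    rw [hFcyc y hy a b c, hanti1 y hy b c a]
  -- antisymmetry of K in its last two indices
  have hKanti : ∀ y ∈ U, ∀ a μ ν, Kt g F y a μ ν = -Kt g F y a ν μ := by
    intro y hy a μ ν
    unfold Kt
    rw [show (∑ κ, (g y)⁻¹ a κ * F y κ μ ν) = ∑ κ, -((g y)⁻¹ a κ * F y κ ν μ) from
      Finset.sum_congr rfl fun κ _ => by rw [hanti2 y hy κ μ ν]; ring]
    rw [Finset.sum_neg_distrib]
    ring
  -- tracelessness of K
  have hKtr : ∀ y ∈ U, ∀ μ, (∑ a, Kt g F y a μ a) = 0 := by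
    intro y hy μ
    unfold Kt
    rw [← Finset.mul_sum]
    have h2 : (∑ a, ∑ κ, (g y)⁻¹ a κ * F y κ μ a)
        = -∑ a, ∑ κ, (g y)⁻¹ a κ * F y κ μ a := by
      calc (∑ a, ∑ κ, (g y)⁻¹ a κ * F y κ μ a)
          = ∑ κ, ∑ a, (g y)⁻¹ a κ * F y κ μ a := Finset.sum_comm
      _ = ∑ a, ∑ κ, -((g y)⁻¹ a κ * F y κ μ a) := by
          refine Finset.sum_congr rfl fun a _ => Finset.sum_congr rfl fun κ _ => ?_
          rw [hGsymU y hy κ a, hF13 y hy a μ κ]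
          ring
      _ = -∑ a, ∑ κ, (g y)⁻¹ a κ * F y κ μ a := by
          simp [← Finset.sum_neg_distrib]
    have h3 : (∑ a, ∑ κ, (g y)⁻¹ a κ * F y κ μ a) = 0 := by linarith
    rw [h3]
    ring
  -- symmetry of partial derivatives of g
  have hpdgsym : ∀ μ α β, pd μ (fun y => g y α β) x = pd μ (fun y => g y β α) x := by
    intro μ α β
    apply pd_congr_nhds
    filter_upwards [N] with y hy
    calc g y α β = (g y)ᵀ β α := rfl
    _ = g y β α := by rw [hgsym y hy]
  -- symmetry of the Levi-Civita connection in its lower indices, at x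
  have hΛsym : ∀ η α β, levi g x η α β = levi g x η β α := by
    intro η α β
    unfold levi
    refine congrArg _ (Finset.sum_congr rfl fun μ _ => ?_)
    rw [hpdgsym β α μ, hpdgsym α μ β, hpdgsym μ α β]
    ring
  -- derivative antisymmetry of K
  have hpdKanti : ∀ μ a j i,
      pd μ (fun y => Kt g F y a j i) x = -pd μ (fun y => Kt g F y a i j) x := by
    intro μ a j i
    calc pd μ (fun y => Kt g F y a j i) x
        = pd μ (fun y => -Kt g F y a i j) x := by
          apply pd_congr_nhds
          filter_upwards [N] with y hy
          exact hKanti y hy a j i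
    _ = -pd μ (fun y => Kt g F y a i j) x := pd_neg
  -- derivative of the trace of K vanishes
  have hpdKtr : ∀ μ j, (∑ a, pd μ (fun y => Kt g F y a j a) x) = 0 := by
    intro μ j
    rw [← pd_sum (fun a _ => dK a j a)]
    refine pd_eventually_zero ?_
    filter_upwards [N] with y hy
    exact hKtr y hy j
  -- Rewrite the connection in terms of Kt
  have hΓeq : (fun y α μ ν => levi g y α μ ν + (1 / 2) * ∑ κ, (g y)⁻¹ α κ * F y κ μ ν)
      = fun y α μ ν => levi g y α μ ν + Kt g F y α μ ν := rfl
  rw [hΓeq]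
  -- decomposition of the Riemann tensor of the modified connection
  have hriem : ∀ a j i,
      riem (fun y α μ ν => levi g y α μ ν + Kt g F y α μ ν) x a j a i
        = riem (levi g) x a j a i
          + pd a (fun y => Kt g F y a j i) x - pd i (fun y => Kt g F y a j a) x
          + ∑ r, (levi g x a r a * Kt g F x r j i
              + Kt g F x a r a * levi g x r j i
              + Kt g F x a r a * Kt g F x r j i
              - levi g x a r i * Kt g F x r j a
              - Kt g F x a r i * levi g x r j a
              - Kt g F x a r i * Kt g F x r j a) := by
    intro a j i
    simp only [riem]
    have e1 : pd a (fun y => levi g y a j i + Kt g F y a j i) x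
        = pd a (fun y => levi g y a j i) x + pd a (fun y => Kt g F y a j i) x :=
      pd_add (dLevi a j i) (dK a j i)
    have e2 : pd i (fun y => levi g y a j a + Kt g F y a j a) x
        = pd i (fun y => levi g y a j a) x + pd i (fun y => Kt g F y a j a) x :=
      pd_add (dLevi a j a) (dK a j a)
    rw [e1, e2]
    have hs : (∑ r, ((levi g x a r a + Kt g F x a r a) * (levi g x r j i + Kt g F x r j i)
          - (levi g x a r i + Kt g F x a r i) * (levi g x r j a + Kt g F x r j a)))
        = (∑ r, (levi g x a r a * levi g x r j i - levi g x a r i * levi g x r j a))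
          + ∑ r, (levi g x a r a * Kt g F x r j i
              + Kt g F x a r a * levi g x r j i
              + Kt g F x a r a * Kt g F x r j i
              - levi g x a r i * Kt g F x r j a
              - Kt g F x a r i * levi g x r j a
              - Kt g F x a r i * Kt g F x r j a) := by
      rw [← Finset.sum_add_distrib]
      exact Finset.sum_congr rfl fun r _ => by ring
    rw [hs]
    ring
  -- main decomposition at the level of the Ricci scalar
  have M1 : ricciScalar g (fun y α μ ν => levi g y α μ ν + Kt g F y α μ ν) x
      = ricciScalar g (levi g) x
        + (∑ j, ∑ i, (g x)⁻¹ j i * ∑ a, pd a (fun y => Kt g F y a j i) x)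
        - (∑ j, ∑ i, (g x)⁻¹ j i * ∑ a, pd i (fun y => Kt g F y a j a) x)
        + (∑ j, ∑ i, (g x)⁻¹ j i * ∑ a, ∑ r, (levi g x a r a * Kt g F x r j i
              + Kt g F x a r a * levi g x r j i
              + Kt g F x a r a * Kt g F x r j i
              - levi g x a r i * Kt g F x r j a
              - Kt g F x a r i * levi g x r j a
              - Kt g F x a r i * Kt g F x r j a)) := by
    unfold ricciScalar
    have inner : ∀ j i, (∑ a, riem (fun y α μ ν => levi g y α μ ν + Kt g F y α μ ν) x a j a i)
        = (∑ a, riem (levi g) x a j a i)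
          + (∑ a, pd a (fun y => Kt g F y a j i) x)
          - (∑ a, pd i (fun y => Kt g F y a j a) x)
          + (∑ a, ∑ r, (levi g x a r a * Kt g F x r j i
              + Kt g F x a r a * levi g x r j i
              + Kt g F x a r a * Kt g F x r j i
              - levi g x a r i * Kt g F x r j a
              - Kt g F x a r i * levi g x r j a
              - Kt g F x a r i * Kt g F x r j a)) := by
      intro j i
      rw [show (∑ a, riem (fun y α μ ν => levi g y α μ ν + Kt g F y α μ ν) x a j a i)
          = ∑ a, (riem (levi g) x a j a i
            + pd a (fun y => Kt g F y a j i) x - pd i (fun y => Kt g F y a j a) x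
            + ∑ r, (levi g x a r a * Kt g F x r j i
              + Kt g F x a r a * levi g x r j i
              + Kt g F x a r a * Kt g F x r j i
              - levi g x a r i * Kt g F x r j a
              - Kt g F x a r i * levi g x r j a
              - Kt g F x a r i * Kt g F x r j a)) from
        Finset.sum_congr rfl fun a _ => hriem a j i]
      simp only [Finset.sum_add_distrib, Finset.sum_sub_distrib]
    calc (∑ j, ∑ i, (g x)⁻¹ j i * ∑ a,
            riem (fun y α μ ν => levi g y α μ ν + Kt g F y α μ ν) x a j a i)
        = ∑ j, ∑ i, ((g x)⁻¹ j i * ∑ a, riem (levi g) x a j a i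
            + (g x)⁻¹ j i * ∑ a, pd a (fun y => Kt g F y a j i) x
            - (g x)⁻¹ j i * ∑ a, pd i (fun y => Kt g F y a j a) x
            + (g x)⁻¹ j i * ∑ a, ∑ r, (levi g x a r a * Kt g F x r j i
              + Kt g F x a r a * levi g x r j i
              + Kt g F x a r a * Kt g F x r j i
              - levi g x a r i * Kt g F x r j a
              - Kt g F x a r i * levi g x r j a
              - Kt g F x a r i * Kt g F x r j a)) := by
          refine Finset.sum_congr rfl fun j _ => Finset.sum_congr rfl fun i _ => ?_
          rw [inner j i]
          ring
      _ = _ := by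
          simp only [Finset.sum_add_distrib, Finset.sum_sub_distrib]
  -- the two derivative pieces vanish
  have M2 : (∑ j, ∑ i, (g x)⁻¹ j i * ∑ a, pd a (fun y => Kt g F y a j i) x) = 0 := by
    refine contract_antisym (fun j i => (g x)⁻¹ j i)
      (fun j i => ∑ a, pd a (fun y => Kt g F y a j i) x) (fun i j => hGsym i j) ?_
    intro j i
    rw [← Finset.sum_neg_distrib]
    exact Finset.sum_congr rfl fun a _ => hpdKanti a a j i
  have M3 : (∑ j, ∑ i, (g x)⁻¹ j i * ∑ a, pd i (fun y => Kt g F y a j a) x) = 0 := by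
    have h : ∀ j i : Fin n, (g x)⁻¹ j i * (∑ a, pd i (fun y => Kt g F y a j a) x) = 0 := by
      intro j i
      rw [hpdKtr i j, mul_zero]
    calc (∑ j, ∑ i, (g x)⁻¹ j i * ∑ a, pd i (fun y => Kt g F y a j a) x)
        = ∑ j : Fin n, ∑ i : Fin n, (0 : ℝ) :=
          Finset.sum_congr rfl fun j _ => Finset.sum_congr rfl fun i _ => h j i
    _ = 0 := by simp
  -- generic vanishing of a contraction antisymmetric under (j i)(a r)
  have sum4_antisym : ∀ t : Fin n → Fin n → Fin n → Fin n → ℝ,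
      (∀ j i a r, t i j r a = -t j i a r) →
      (∑ j, ∑ i, ∑ a, ∑ r, t j i a r) = 0 := by
    intro t ht
    have h : (∑ j, ∑ i, ∑ a, ∑ r, t j i a r) = -(∑ j, ∑ i, ∑ a, ∑ r, t j i a r) := by
      calc (∑ j, ∑ i, ∑ a, ∑ r, t j i a r)
          = ∑ j, ∑ i, ∑ a, ∑ r, t i j r a := sum4_reindex t
      _ = ∑ j, ∑ i, ∑ a, ∑ r, -t j i a r := by
          refine Finset.sum_congr rfl fun j _ => Finset.sum_congr rfl fun i _ =>
            Finset.sum_congr rfl fun a _ => Finset.sum_congr rfl fun r _ => ht j i a r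
      _ = -(∑ j, ∑ i, ∑ a, ∑ r, t j i a r) := by simp only [Finset.sum_neg_distrib]
    linarith
  -- reduce the quadratic part per (j,i)
  have innerQ : ∀ j i, (∑ a, ∑ r, (levi g x a r a * Kt g F x r j i
              + Kt g F x a r a * levi g x r j i
              + Kt g F x a r a * Kt g F x r j i
              - levi g x a r i * Kt g F x r j a
              - Kt g F x a r i * levi g x r j a
              - Kt g F x a r i * Kt g F x r j a))
      = (∑ a, ∑ r, levi g x a r a * Kt g F x r j i)
        - (∑ a, ∑ r, (levi g x a r i * Kt g F x r j a + Kt g F x a r i * levi g x r j a))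
        - (∑ a, ∑ r, Kt g F x a r i * Kt g F x r j a) := by
    intro j i
    calc (∑ a, ∑ r, (levi g x a r a * Kt g F x r j i
              + Kt g F x a r a * levi g x r j i
              + Kt g F x a r a * Kt g F x r j i
              - levi g x a r i * Kt g F x r j a
              - Kt g F x a r i * levi g x r j a
              - Kt g F x a r i * Kt g F x r j a))
        = ∑ r, ∑ a, (levi g x a r a * Kt g F x r j i
              + Kt g F x a r a * levi g x r j i
              + Kt g F x a r a * Kt g F x r j i
              - levi g x a r i * Kt g F x r j a
              - Kt g F x a r i * levi g x r j a
              - Kt g F x a r i * Kt g F x r j a) := Finset.sum_comm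
    _ = ∑ r, ((∑ a, (levi g x a r a * Kt g F x r j i
              - (levi g x a r i * Kt g F x r j a + Kt g F x a r i * levi g x r j a)
              - Kt g F x a r i * Kt g F x r j a))
          + (∑ a, Kt g F x a r a) * (levi g x r j i + Kt g F x r j i)) := by
        refine Finset.sum_congr rfl fun r _ => ?_
        rw [Finset.sum_mul, ← Finset.sum_add_distrib]
        exact Finset.sum_congr rfl fun a _ => by ring
    _ = ∑ r, ∑ a, (levi g x a r a * Kt g F x r j i
              - (levi g x a r i * Kt g F x r j a + Kt g F x a r i * levi g x r j a)
              - Kt g F x a r i * Kt g F x r j a) := by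
        refine Finset.sum_congr rfl fun r _ => ?_
        rw [hKtr x hx r, zero_mul, add_zero]
    _ = ∑ a, ∑ r, (levi g x a r a * Kt g F x r j i
              - (levi g x a r i * Kt g F x r j a + Kt g F x a r i * levi g x r j a)
              - Kt g F x a r i * Kt g F x r j a) := Finset.sum_comm
    _ = _ := by simp only [Finset.sum_sub_distrib]
  -- the first quadratic piece vanishes
  have A1 : (∑ j, ∑ i, (g x)⁻¹ j i * ∑ a, ∑ r, levi g x a r a * Kt g F x r j i) = 0 := by
    refine contract_antisym (fun j i => (g x)⁻¹ j i)
      (fun j i => ∑ a, ∑ r, levi g x a r a * Kt g F x r j i) (fun i j => hGsym i j) ?_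
    intro j i
    rw [show -(∑ a, ∑ r, levi g x a r a * Kt g F x r i j)
        = ∑ a, ∑ r, -(levi g x a r a * Kt g F x r i j) from by
      simp only [Finset.sum_neg_distrib]]
    refine Finset.sum_congr rfl fun a _ => Finset.sum_congr rfl fun r _ => ?_
    rw [hKanti x hx r j i]
    ring
  -- the mixed quadratic pieces cancel
  have A45 : (∑ j, ∑ i, (g x)⁻¹ j i *
        ∑ a, ∑ r, (levi g x a r i * Kt g F x r j a + Kt g F x a r i * levi g x r j a)) = 0 := by
    have flat : (∑ j, ∑ i, (g x)⁻¹ j i *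
          ∑ a, ∑ r, (levi g x a r i * Kt g F x r j a + Kt g F x a r i * levi g x r j a))
        = ∑ j, ∑ i, ∑ a, ∑ r, (g x)⁻¹ j i *
            (levi g x a r i * Kt g F x r j a + Kt g F x a r i * levi g x r j a) := by
      simp only [Finset.mul_sum]
    rw [flat]
    refine sum4_antisym
      (fun j i a r => (g x)⁻¹ j i *
        (levi g x a r i * Kt g F x r j a + Kt g F x a r i * levi g x r j a)) ?_
    intro j i a r
    rw [hGsym i j, hΛsym r a j, hΛsym a i r, hKanti x hx a i r, hKanti x hx r a j]
    ring
  -- the purely quadratic piece gives the F·F contraction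
  have hKK : ∀ j i a r : Fin n, Kt g F x a r i * Kt g F x r j a
      = (1 / 4) * ∑ κ, ∑ lam, ((g x)⁻¹ a κ * F x κ r i) * ((g x)⁻¹ r lam * F x lam j a) := by
    intro j i a r
    unfold Kt
    rw [show ((1 : ℝ) / 2 * ∑ κ, (g x)⁻¹ a κ * F x κ r i)
          * ((1 : ℝ) / 2 * ∑ κ, (g x)⁻¹ r κ * F x κ j a)
        = (1 / 4) * ((∑ κ, (g x)⁻¹ a κ * F x κ r i) * (∑ κ, (g x)⁻¹ r κ * F x κ j a)) from by
      ring]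
    rw [Finset.sum_mul_sum]
  have hKin : ∀ j i : Fin n, (∑ a, ∑ r, Kt g F x a r i * Kt g F x r j a)
      = (1 / 4) * ∑ a, ∑ r, ∑ κ, ∑ lam,
          ((g x)⁻¹ a κ * F x κ r i) * ((g x)⁻¹ r lam * F x lam j a) := by
    intro j i
    calc (∑ a, ∑ r, Kt g F x a r i * Kt g F x r j a)
        = ∑ a, ∑ r, ((1 / 4) * ∑ κ, ∑ lam,
            ((g x)⁻¹ a κ * F x κ r i) * ((g x)⁻¹ r lam * F x lam j a)) :=
          Finset.sum_congr rfl fun a _ => Finset.sum_congr rfl fun r _ => hKK j i a r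
    _ = _ := by simp only [← Finset.mul_sum]
  have hδ : (∑ j, ∑ i, (g x)⁻¹ j i * ∑ a, ∑ r, Kt g F x a r i * Kt g F x r j a)
      = (1 / 4) * ∑ x1, ∑ x2, ∑ x3, ∑ x4, ∑ x5, ∑ x6, (g x)⁻¹ x1 x2 *
          (((g x)⁻¹ x3 x5 * F x x5 x4 x2) * ((g x)⁻¹ x4 x6 * F x x6 x1 x3)) := by
    calc (∑ j, ∑ i, (g x)⁻¹ j i * ∑ a, ∑ r, Kt g F x a r i * Kt g F x r j a)
        = ∑ j, ∑ i, ((1 / 4) * ((g x)⁻¹ j i * ∑ a, ∑ r, ∑ κ, ∑ lam,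
            ((g x)⁻¹ a κ * F x κ r i) * ((g x)⁻¹ r lam * F x lam j a))) := by
          refine Finset.sum_congr rfl fun j _ => Finset.sum_congr rfl fun i _ => ?_
          rw [hKin j i]
          ring
    _ = (1 / 4) * ∑ j, ∑ i, (g x)⁻¹ j i * ∑ a, ∑ r, ∑ κ, ∑ lam,
            ((g x)⁻¹ a κ * F x κ r i) * ((g x)⁻¹ r lam * F x lam j a) := by
          simp only [← Finset.mul_sum]
    _ = (1 / 4) * ∑ j, ∑ i, ∑ a, ∑ r, ∑ κ, ∑ lam, (g x)⁻¹ j i *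
            (((g x)⁻¹ a κ * F x κ r i) * ((g x)⁻¹ r lam * F x lam j a)) := by
          refine congrArg _ ?_
          simp only [Finset.mul_sum]
  have hγ : (∑ a, ∑ b, ∑ c, ∑ a', ∑ b', ∑ c',
        (g x)⁻¹ a a' * (g x)⁻¹ b b' * (g x)⁻¹ c c' * F x a b c * F x a' b' c')
      = ∑ x1, ∑ x2, ∑ x3, ∑ x4, ∑ x5, ∑ x6, (g x)⁻¹ x1 x2 *
          (((g x)⁻¹ x3 x5 * F x x5 x4 x2) * ((g x)⁻¹ x4 x6 * F x x6 x1 x3)) := by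
    have h1 : (∑ a, ∑ b, ∑ c, ∑ a', ∑ b', ∑ c',
          (g x)⁻¹ a a' * (g x)⁻¹ b b' * (g x)⁻¹ c c' * F x a b c * F x a' b' c')
        = ∑ y1, ∑ y2, ∑ y3, ∑ y4, ∑ y5, ∑ y6,
            (g x)⁻¹ y5 y3 * (g x)⁻¹ y4 y6 * (g x)⁻¹ y2 y1 * F x y5 y4 y2 * F x y3 y6 y1 :=
      sum6_perm (fun a b c a' b' c' =>
        (g x)⁻¹ a a' * (g x)⁻¹ b b' * (g x)⁻¹ c c' * F x a b c * F x a' b' c')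
    rw [h1]
    refine Finset.sum_congr rfl fun y1 _ => Finset.sum_congr rfl fun y2 _ =>
      Finset.sum_congr rfl fun y3 _ => Finset.sum_congr rfl fun y4 _ =>
      Finset.sum_congr rfl fun y5 _ => Finset.sum_congr rfl fun y6 _ => ?_
    rw [hGsym y5 y3, hGsym y2 y1, hFcyc x hx y3 y6 y1]
    ring
  have A6 : (∑ j, ∑ i, (g x)⁻¹ j i * ∑ a, ∑ r, Kt g F x a r i * Kt g F x r j a)
      = (1 / 4) * ∑ a, ∑ b, ∑ c, ∑ a', ∑ b', ∑ c',
          (g x)⁻¹ a a' * (g x)⁻¹ b b' * (g x)⁻¹ c c' * F x a b c * F x a' b' c' := by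
    rw [hδ, hγ]
  -- assemble the quadratic part
  have M4 : (∑ j, ∑ i, (g x)⁻¹ j i * ∑ a, ∑ r, (levi g x a r a * Kt g F x r j i
              + Kt g F x a r a * levi g x r j i
              + Kt g F x a r a * Kt g F x r j i
              - levi g x a r i * Kt g F x r j a
              - Kt g F x a r i * levi g x r j a
              - Kt g F x a r i * Kt g F x r j a))
      = -((1 / 4) * ∑ a, ∑ b, ∑ c, ∑ a', ∑ b', ∑ c',
          (g x)⁻¹ a a' * (g x)⁻¹ b b' * (g x)⁻¹ c c' * F x a b c * F x a' b' c') := by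
    calc (∑ j, ∑ i, (g x)⁻¹ j i * ∑ a, ∑ r, (levi g x a r a * Kt g F x r j i
              + Kt g F x a r a * levi g x r j i
              + Kt g F x a r a * Kt g F x r j i
              - levi g x a r i * Kt g F x r j a
              - Kt g F x a r i * levi g x r j a
              - Kt g F x a r i * Kt g F x r j a))
        = ∑ j, ∑ i, ((g x)⁻¹ j i * ∑ a, ∑ r, levi g x a r a * Kt g F x r j i
            - (g x)⁻¹ j i * ∑ a, ∑ r, (levi g x a r i * Kt g F x r j a
                + Kt g F x a r i * levi g x r j a)
            - (g x)⁻¹ j i * ∑ a, ∑ r, Kt g F x a r i * Kt g F x r j a) := by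
          refine Finset.sum_congr rfl fun j _ => Finset.sum_congr rfl fun i _ => ?_
          rw [innerQ j i]
          ring
    _ = (∑ j, ∑ i, (g x)⁻¹ j i * ∑ a, ∑ r, levi g x a r a * Kt g F x r j i)
        - (∑ j, ∑ i, (g x)⁻¹ j i * ∑ a, ∑ r, (levi g x a r i * Kt g F x r j a
            + Kt g F x a r i * levi g x r j a))
        - (∑ j, ∑ i, (g x)⁻¹ j i * ∑ a, ∑ r, Kt g F x a r i * Kt g F x r j a) := by
          simp only [Finset.sum_sub_distrib]
    _ = _ := by
          rw [A1, A45, A6]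
          ring
  rw [M1, M2, M3, M4]
  ring
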